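/- Let G be an ω-narrow topological group such that for every continuous function f : G → ℝ there exists a normal admissible subgroup N of G with f constant on the coset gN for each g ∈ G. Then G is simply sm-factorizable. -/

import Mathlib

open Topology TopologicalSpace Pointwise Function Set

def IsCozero {X : Type*} [TopologicalSpace X] (U : Set X) : Prop :=
  ∃ f : X → ℝ, Continuous f ∧ U = f ⁻¹' {x : ℝ | x ≠ 0}

/-- A topological group is simply sm-factorizable if every cozero set is saturated with
respect to some continuous surjective homomorphism onto a separable metrizable topological group. -/
def SimplySMFactorizable (G : Type*) [Group G] [TopologicalSpace G] : Prop :=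
  ∀ U : Set G, IsCozero U →
    ∃ (H : Type) (gH : Group H) (tH : TopologicalSpace H),
      letI := gH
      letI := tH
      IsTopologicalGroup H ∧ SeparableSpace H ∧ MetrizableSpace H ∧
        ∃ π : G →* H, Continuous π ∧ Surjective π ∧ ⇑π ⁻¹' (⇑π '' U) = U

/-- A subset N of a topological group is an admissible subgroup if it is the intersection of a
sequence of open symmetric neighborhoods of the identity with Uₙ₊₁·Uₙ₊₁ ⊆ Uₙ. -/
def IsAdmissible {G : Type*} [Group G] [TopologicalSpace G] (N : Set G) : Prop :=
  ∃ U : ℕ → Set G,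
    (∀ n, IsOpen (U n) ∧ (1 : G) ∈ U n ∧ (U n)⁻¹ = U n) ∧
    (∀ n, U (n + 1) * U (n + 1) ⊆ U n) ∧ N = ⋂ n, U n

/-- A (para)topological group is ω-narrow if each neighborhood of the identity translates
over a countable set to cover the group. -/
def OmegaNarrow (G : Type*) [Group G] [TopologicalSpace G] : Prop :=
  ∀ U ∈ 𝓝 (1 : G), ∃ A : Set G, A.Countable ∧ A * U = Set.univ ∧ U * A = Set.univ
open Topology TopologicalSpace Pointwise Function Set Filter

/-- Generic dependent chain construction via choice. -/
private noncomputable def depChain {α : Type*} {R : ℕ → α → α → Prop}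
    (h : ∀ n a, ∃ b, R n a b) (a0 : α) : ℕ → α
  | 0 => a0
  | n + 1 => (h n (depChain h a0 n)).choose

private lemma depChain_spec {α : Type*} {R : ℕ → α → α → Prop}
    (h : ∀ n a, ∃ b, R n a b) (a0 : α) (n : ℕ) :
    R n (depChain h a0 n) (depChain h a0 (n + 1)) :=
  (h n (depChain h a0 n)).choose_spec


private structure NarrowState (G : Type*) [Group G] [TopologicalSpace G] where
  V : Set G
  a : ℕ → ℕ → G
  isOpen' : IsOpen V
  one_mem' : (1 : G) ∈ V
  symm' : V⁻¹ = V

private def NarrowRel {G : Type*} [Group G] [TopologicalSpace G]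
    (U : ℕ → Set G) (n : ℕ) (s t : NarrowState G) : Prop :=
  (∀ k, k ≠ n → t.a k = s.a k) ∧
  Set.range (t.a n) * s.V = Set.univ ∧
  s.V * Set.range (t.a n) = Set.univ ∧
  t.V * t.V ⊆ s.V ∧
  t.V ⊆ U (n + 1) ∧
  ∀ k ≤ n, ∀ i ≤ n, ∀ g ∈ t.V, t.a k i * g * (t.a k i)⁻¹ ∈ s.V

private lemma narrow_step {G : Type*} [Group G] [TopologicalSpace G] [IsTopologicalGroup G]
    (hNar : OmegaNarrow G) (U : ℕ → Set G)
    (hUo : ∀ n, IsOpen (U n)) (hU1 : ∀ n, (1 : G) ∈ U n)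
    (n : ℕ) (s : NarrowState G) : ∃ t : NarrowState G, NarrowRel U n s t := by
  have hVnhds : s.V ∈ 𝓝 (1 : G) := s.isOpen'.mem_nhds s.one_mem'
  obtain ⟨A, hAc, hAV, hVA⟩ := hNar s.V hVnhds
  have hAne : A.Nonempty := by
    by_contra h
    rw [Set.not_nonempty_iff_eq_empty] at h
    rw [h, Set.empty_mul] at hAV
    exact (Set.univ_nonempty (α := G)).ne_empty hAV.symm
  obtain ⟨e, he⟩ := hAc.exists_eq_range hAne
  set a' : ℕ → ℕ → G := Function.update s.a n e with ha'def
  have ha'n : a' n = e := Function.update_self n e s.a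
  set O : Set G := (s.V ∩ U (n + 1)) ∩ ⋂ k ∈ Finset.range (n + 1), ⋂ i ∈ Finset.range (n + 1),
      (fun g => a' k i * g * (a' k i)⁻¹) ⁻¹' s.V with hOdef
  have hOopen : IsOpen O := by
    refine (s.isOpen'.inter (hUo (n + 1))).inter ?_
    refine isOpen_biInter_finset fun k _ => isOpen_biInter_finset fun i _ => ?_
    exact s.isOpen'.preimage (by continuity)
  have hO1 : (1 : G) ∈ O := by
    refine ⟨⟨s.one_mem', hU1 _⟩, ?_⟩
    simp only [Set.mem_iInter, Set.mem_preimage]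
    intro k _ i _
    simpa using s.one_mem'
  obtain ⟨W0, hW0o, hW01, hW0m⟩ := exists_open_nhds_one_mul_subset (hOopen.mem_nhds hO1)
  have hW0sub : W0 ⊆ O := fun g hg => hW0m (by simpa using Set.mul_mem_mul hg hW01)
  set W : Set G := W0 ∩ W0⁻¹ with hWdef
  have hWo : IsOpen W := hW0o.inter hW0o.inv
  have hW1 : (1 : G) ∈ W := ⟨hW01, by simpa using hW01⟩
  have hWsymm : W⁻¹ = W := by
    rw [hWdef, Set.inter_inv, inv_inv, Set.inter_comm]
  have hWsub : W ⊆ O := fun g hg => hW0sub hg.1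
  refine ⟨⟨W, a', hWo, hW1, hWsymm⟩, ?_, ?_, ?_, ?_, ?_, ?_⟩
  · intro k hk
    exact Function.update_of_ne hk e s.a
  · show Set.range (a' n) * s.V = Set.univ
    rw [ha'n, ← he]; exact hAV
  · show s.V * Set.range (a' n) = Set.univ
    rw [ha'n, ← he]; exact hVA
  · intro g hg
    obtain ⟨g1, hg1, g2, hg2, rfl⟩ := Set.mem_mul.1 hg
    exact (hW0m (Set.mul_mem_mul hg1.1 hg2.1)).1.1
  · intro g hg
    exact (hWsub hg).1.2
  · intro k hk i hi g hg
    have := (hWsub hg).2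
    simp only [Set.mem_iInter, Set.mem_preimage, Finset.mem_range] at this
    exact this k (by omega) i (by omega)

private lemma exists_goodSeq {G : Type*} [Group G] [TopologicalSpace G] [IsTopologicalGroup G]
    (hNar : OmegaNarrow G) (U : ℕ → Set G)
    (hU : ∀ n, IsOpen (U n) ∧ (1 : G) ∈ U n ∧ (U n)⁻¹ = U n) :
    ∃ (V : ℕ → Set G) (den : ℕ → ℕ → G),
      (∀ n, IsOpen (V n)) ∧ (∀ n, (1 : G) ∈ V n) ∧ (∀ n, (V n)⁻¹ = V n) ∧
      (∀ n, V (n + 1) * V (n + 1) ⊆ V n) ∧ (∀ n, V n ⊆ U n) ∧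
      (∀ n, Set.range (den n) * V n = Set.univ) ∧
      (∀ (x : G) (n : ℕ), ∃ j, ∀ g ∈ V j, x * g * x⁻¹ ∈ V n) := by
  have step := narrow_step hNar U (fun n => (hU n).1) (fun n => (hU n).2.1)
  set s0 : NarrowState G := ⟨U 0, fun _ _ => 1, (hU 0).1, (hU 0).2.1, (hU 0).2.2⟩ with hs0
  set c : ℕ → NarrowState G := depChain step s0 with hc_def
  have hc : ∀ n, NarrowRel U n (c n) (c (n + 1)) := fun n => depChain_spec step s0 n
  set V : ℕ → Set G := fun n => (c n).V with hVdef
  set den : ℕ → ℕ → G := fun n => (c (n + 1)).a n with hdendef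
  have hstab : ∀ m k, k < m → (c m).a k = den k := by
    intro m
    induction m with
    | zero => omega
    | succ m ih =>
      intro k hk
      rcases Nat.lt_succ_iff_lt_or_eq.1 hk with h | rfl
      · rw [(hc m).1 k (by omega), ih k h]
      · rfl
  have hVo : ∀ n, IsOpen (V n) := fun n => (c n).isOpen'
  have hV1 : ∀ n, (1 : G) ∈ V n := fun n => (c n).one_mem'
  have hVsymm : ∀ n, (V n)⁻¹ = V n := fun n => (c n).symm'
  have hVmul : ∀ n, V (n + 1) * V (n + 1) ⊆ V n := fun n => (hc n).2.2.2.1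
  have hVU : ∀ n, V n ⊆ U n := by
    intro n
    cases n with
    | zero => exact subset_rfl
    | succ n => exact (hc n).2.2.2.2.1
  have hVmono : ∀ n, V (n + 1) ⊆ V n := by
    intro n g hg
    have := hVmul n (Set.mul_mem_mul hg (hV1 (n + 1)))
    rwa [mul_one] at this
  have hVmonole : ∀ m n, n ≤ m → V m ⊆ V n := by
    intro m n h
    induction h with
    | refl => exact subset_rfl
    | step _ ih => exact fun g hg => ih (hVmono _ hg)
  refine ⟨V, den, hVo, hV1, hVsymm, hVmul, hVU, fun n => ?_, ?_⟩
  · exact (hc n).2.1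
  · intro x n
    have hcov : V (n + 2) * Set.range (den (n + 2)) = Set.univ := (hc (n + 2)).2.2.1
    have hx : x ∈ V (n + 2) * Set.range (den (n + 2)) := by rw [hcov]; trivial
    obtain ⟨w, hw, y, ⟨i, rfl⟩, rfl⟩ := Set.mem_mul.1 hx
    set a : G := den (n + 2) i with hadef
    set p : ℕ := max (n + 2) i with hpdef
    have hconjstep := (hc p).2.2.2.2.2 (n + 2) (le_max_left _ _) i (le_max_right _ _)
    have haeq : (c (p + 1)).a (n + 2) = den (n + 2) :=
      hstab (p + 1) (n + 2) (by omega)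
    rw [haeq] at hconjstep
    refine ⟨p + 1, fun g hg => ?_⟩
    have h1 : a * g * a⁻¹ ∈ V p := hconjstep g hg
    have h2 : a * g * a⁻¹ ∈ V (n + 2) := hVmonole p (n + 2) (le_max_left _ _) h1
    have hw' : w⁻¹ ∈ V (n + 2) := by
      rw [← hVsymm (n + 2)]; exact Set.inv_mem_inv.2 hw
    have hA : w * (a * g * a⁻¹) ∈ V (n + 1) := hVmul (n + 1) (Set.mul_mem_mul hw h2)
    have hfin : w * (a * g * a⁻¹) * w⁻¹ ∈ V n :=
      hVmul n (Set.mul_mem_mul hA (hVmono (n + 1) hw'))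
    have heq : (w * a) * g * (w * a)⁻¹ = w * (a * g * a⁻¹) * w⁻¹ := by group
    rwa [heq]
private def QW {G : Type*} [Group G] (N : Subgroup G) : Type _ := G ⧸ N

private instance {G : Type*} [Group G] (N : Subgroup G) [N.Normal] : Group (QW N) :=
  inferInstanceAs (Group (G ⧸ N))

/-- An ω-narrow topological group in which every continuous real-valued function is constant
on the cosets of some normal admissible subgroup is simply sm-factorizable. -/
theorem statement10 (G : Type*) [Group G] [TopologicalSpace G] [IsTopologicalGroup G]
    (hNar : OmegaNarrow G)
    (hConst : ∀ f : G → ℝ, Continuous f →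
      ∃ N : Subgroup G, N.Normal ∧ IsAdmissible (N : Set G) ∧
        ∀ g : G, ∀ x ∈ N, f (g * x) = f g) :
    SimplySMFactorizable G := by
  intro U hU
  obtain ⟨f, hf, hUf⟩ := hU
  obtain ⟨N, hNorm, hAdm, hconst⟩ := hConst f hf
  haveI := hNorm
  obtain ⟨Us, hUs1, hUs2, hNeq⟩ := hAdm
  have hNsub : ∀ n, (N : Set G) ⊆ Us n := fun n => by
    rw [hNeq]; exact Set.iInter_subset _ n
  have hNall : ∀ x : G, (∀ n, x ∈ Us n) → x ∈ N := fun x hx => by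
    rw [← SetLike.mem_coe, hNeq]; exact Set.mem_iInter.2 hx
  obtain ⟨V, den, hVo, hV1, hVsym, hVmul, hVU, hVcov, hVconj⟩ := exists_goodSeq hNar Us hUs1
  -- The saturated neighborhoods W n = V n * N
  set W : ℕ → Set G := fun n => V n * (N : Set G) with hWdef
  have hWmem : ∀ {n : ℕ} {g : G}, g ∈ W n ↔ ∃ v ∈ V n, ∃ m ∈ (N : Set G), v * m = g :=
    fun {n g} => Set.mem_mul
  have hWo : ∀ n, IsOpen (W n) := fun n => (hVo n).mul_right
  have hVsubW : ∀ n, V n ⊆ W n := fun n g hg => by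
    simpa using Set.mul_mem_mul hg (N.one_mem : (1 : G) ∈ (N : Set G))
  have hW1 : ∀ n, (1 : G) ∈ W n := fun n => hVsubW n (hV1 n)
  have hWsymKey : ∀ n, ∀ g ∈ W n, g⁻¹ ∈ W n := by
    rintro n g hg
    obtain ⟨v, hv, m, hm, rfl⟩ := hWmem.1 hg
    refine hWmem.2 ⟨v⁻¹, ?_, v * m⁻¹ * v⁻¹, ?_, by group⟩
    · rw [← hVsym n]; exact Set.inv_mem_inv.2 hv
    · exact hNorm.conj_mem _ (N.inv_mem hm) v
  have hWmul : ∀ n, W (n + 1) * W (n + 1) ⊆ W n := by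
    intro n g hg
    obtain ⟨g1, hg1, g2, hg2, rfl⟩ := Set.mem_mul.1 hg
    obtain ⟨v1, hv1, m1, hm1, rfl⟩ := hWmem.1 hg1
    obtain ⟨v2, hv2, m2, hm2, rfl⟩ := hWmem.1 hg2
    refine hWmem.2 ⟨v1 * v2, hVmul n (Set.mul_mem_mul hv1 hv2),
      (v2⁻¹ * m1 * v2) * m2, N.mul_mem ?_ hm2, by group⟩
    simpa using hNorm.conj_mem _ hm1 v2⁻¹
  have hWmono : ∀ n, W (n + 1) ⊆ W n := fun n g hg => by
    have := hWmul n (Set.mul_mem_mul hg (hW1 (n + 1)))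
    rwa [mul_one] at this
  have hWmonole : ∀ m n, n ≤ m → W m ⊆ W n := by
    intro m n h
    induction h with
    | refl => exact subset_rfl
    | step _ ih => exact fun g hg => ih (hWmono _ hg)
  have hWN : ∀ n (g : G), g ∈ W n → ∀ m ∈ N, g * m ∈ W n := by
    rintro n g hg m hm
    obtain ⟨v, hv, m', hm', rfl⟩ := hWmem.1 hg
    exact hWmem.2 ⟨v, hv, m' * m, N.mul_mem hm' hm, (mul_assoc _ _ _).symm⟩
  have hWconj : ∀ (x : G) (n : ℕ), ∃ j, ∀ g ∈ W j, x * g * x⁻¹ ∈ W n := by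
    intro x n
    obtain ⟨j, hj⟩ := hVconj x n
    refine ⟨j, ?_⟩
    rintro g hg
    obtain ⟨v, hv, m, hm, rfl⟩ := hWmem.1 hg
    exact hWmem.2 ⟨x * v * x⁻¹, hj v hv, x * m * x⁻¹, hNorm.conj_mem _ hm x, by group⟩
  have hWinter : ∀ x : G, (∀ n, x ∈ W n) → x ∈ N := by
    intro x hx
    refine hNall x fun n => ?_
    obtain ⟨v, hv, m, hm, rfl⟩ := hWmem.1 (hx (n + 1))
    exact hUs2 n (Set.mul_mem_mul (hVU (n + 1) hv) (hNsub (n + 1) hm))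
  -- The quotient group
  set π : G →* QW N := QuotientGroup.mk' N with hπdef
  have hπsurj : Function.Surjective ⇑π := QuotientGroup.mk'_surjective N
  have hπeq : ∀ x y : G, π x = π y ↔ x⁻¹ * y ∈ N := fun x y => QuotientGroup.eq
  have hπone : ∀ x : G, π x = 1 ↔ x ∈ N := fun x => QuotientGroup.eq_one_iff x
  -- saturation of U with respect to π
  have hsat : ⇑π ⁻¹' (⇑π '' U) = U := by
    refine Set.Subset.antisymm ?_ (Set.subset_preimage_image _ _)
    rintro x ⟨u, hu, hux⟩
    have hmem : u⁻¹ * x ∈ N := (hπeq u x).1 hux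
    have hfx : f x = f u := by
      have := hconst u (u⁻¹ * x) hmem
      rwa [mul_inv_cancel_left] at this
    rw [hUf] at hu ⊢
    simpa [Set.mem_preimage, hfx] using hu
  -- group filter basis on the quotient
  set B : GroupFilterBasis (QW N) :=
    { sets := Set.range fun n => ⇑π '' W n
      nonempty := ⟨_, ⟨0, rfl⟩⟩
      inter_sets := by
        rintro _ _ ⟨m, rfl⟩ ⟨n, rfl⟩
        exact ⟨⇑π '' W (max m n), ⟨max m n, rfl⟩,
          Set.subset_inter (Set.image_mono (hWmonole _ _ (le_max_left m n)))
            (Set.image_mono (hWmonole _ _ (le_max_right m n)))⟩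
      one' := by
        rintro _ ⟨n, rfl⟩
        exact ⟨1, hW1 n, map_one π⟩
      mul' := by
        rintro _ ⟨n, rfl⟩
        refine ⟨⇑π '' W (n + 1), ⟨n + 1, rfl⟩, ?_⟩
        rw [← Set.image_mul]
        exact Set.image_mono (hWmul n)
      inv' := by
        rintro _ ⟨n, rfl⟩
        refine ⟨⇑π '' W n, ⟨n, rfl⟩, ?_⟩
        rintro _ ⟨g, hg, rfl⟩
        refine Set.mem_preimage.2 ⟨g⁻¹, hWsymKey n g hg, map_inv π g⟩
      conj' := by
        intro x₀
        rintro _ ⟨n, rfl⟩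
        obtain ⟨x, rfl⟩ := hπsurj x₀
        obtain ⟨j, hj⟩ := hWconj x n
        refine ⟨⇑π '' W j, ⟨j, rfl⟩, ?_⟩
        rintro _ ⟨g, hg, rfl⟩
        refine Set.mem_preimage.2 ⟨x * g * x⁻¹, hj g hg, by simp [map_mul, map_inv]⟩ }
    with hBdef
  letI tQ : TopologicalSpace (QW N) := B.topology
  haveI hTG : IsTopologicalGroup (QW N) := B.isTopologicalGroup
  have hBmem : ∀ n : ℕ, (⇑π '' W n) ∈ B := fun n => ⟨n, rfl⟩
  have hb : (𝓝 (1 : QW N)).HasBasis (fun _ : ℕ => True) (fun n => ⇑π '' W n) := by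
    refine B.nhds_one_hasBasis.to_hasBasis ?_ ?_
    · rintro _ ⟨n, rfl⟩; exact ⟨n, trivial, subset_rfl⟩
    · intro n _; exact ⟨_, ⟨n, rfl⟩, subset_rfl⟩
  -- continuity of π
  have hπcont : Continuous ⇑π := by
    apply continuous_of_continuousAt_one π
    have : Filter.Tendsto ⇑π (𝓝 (1 : G)) (𝓝 (1 : QW N)) := by
      rw [hb.tendsto_right_iff]
      intro n _
      exact Filter.eventually_of_mem ((hWo n).mem_nhds (hW1 n))
        fun g hg => Set.mem_image_of_mem _ hg
    simpa [ContinuousAt, map_one] using this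
  -- points of the quotient in all basic sets lie in N
  have hsatW : ∀ (x : G) (n : ℕ), π x ∈ ⇑π '' W n → x ∈ W n := by
    intro x n hx
    obtain ⟨w, hw, hwx⟩ := hx
    have : w⁻¹ * x ∈ N := (hπeq w x).1 hwx
    have h2 := hWN n w hw _ this
    rwa [mul_inv_cancel_left] at h2
  -- T1
  haveI hT1 : T1Space (QW N) := by
    apply IsTopologicalGroup.t1Space
    rw [← isOpen_compl_iff, isOpen_iff_mem_nhds]
    intro q hq
    obtain ⟨x, rfl⟩ := hπsurj q
    have hxn : ∃ n, π x ∉ ⇑π '' W n := by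
      by_contra h
      push_neg at h
      exact hq (Set.mem_singleton_iff.2 ((hπone x).2 (hWinter x fun n => hsatW x n (h n))))
    obtain ⟨n, hn⟩ := hxn
    rw [(B.nhds_hasBasis (π x)).mem_iff]
    refine ⟨⇑π '' W n, hBmem n, ?_⟩
    rintro _ ⟨b, hb', rfl⟩
    intro h1
    apply hn
    obtain ⟨w, hw, rfl⟩ := hb'
    have hx : π x = π w⁻¹ := by
      have h2 : π x * π w = 1 := h1
      rw [map_inv]
      exact eq_inv_of_mul_eq_one_left h2
    rw [hx]
    exact ⟨w⁻¹, hWsymKey n w hw, rfl⟩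
  haveI : T0Space (QW N) := inferInstance
  haveI hCG : (𝓝 (1 : QW N)).IsCountablyGenerated := hb.isCountablyGenerated
  -- metrizability
  haveI hMetr : MetrizableSpace (QW N) := by
    letI us : UniformSpace (QW N) := IsTopologicalGroup.rightUniformSpace (QW N)
    haveI : (uniformity (QW N)).IsCountablyGenerated := by
      have huni : uniformity (QW N)
          = Filter.comap (fun p : (QW N) × (QW N) => p.2 * p.1⁻¹) (𝓝 1) := rfl
      rw [huni]
      exact Filter.comap.isCountablyGenerated _ _
    exact UniformSpace.metrizableSpace
  -- separability
  haveI hSep : SeparableSpace (QW N) := by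
    refine ⟨⟨⋃ n, ⇑π '' Set.range (den n),
      Set.countable_iUnion fun n => (Set.countable_range _).image _, ?_⟩⟩
    rw [dense_iff_inter_open]
    rintro O hO ⟨q, hq⟩
    obtain ⟨x, rfl⟩ := hπsurj q
    have hOmem : O ∈ 𝓝 (π x) := hO.mem_nhds hq
    rw [(B.nhds_hasBasis (π x)).mem_iff] at hOmem
    obtain ⟨_, ⟨n, rfl⟩, hsub⟩ := hOmem
    have hx : x ∈ Set.range (den n) * V n := by rw [hVcov n]; trivial
    obtain ⟨d, hd, v, hv, hdvx⟩ := Set.mem_mul.1 hx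
    have hvinv : v⁻¹ ∈ V n := by rw [← hVsym n]; exact Set.inv_mem_inv.2 hv
    refine ⟨π d, hsub ?_, Set.mem_iUnion.2 ⟨n, Set.mem_image_of_mem _ hd⟩⟩
    refine ⟨π v⁻¹, Set.mem_image_of_mem _ (hVsubW n hvinv), ?_⟩
    show π x * π v⁻¹ = π d
    rw [← map_mul]
    congr 1
    rw [← hdvx]
    group
  -- smallness
  have hSmall : Small.{0} (QW N) := by
    letI : MetricSpace (QW N) := TopologicalSpace.metrizableSpaceMetric (QW N)
    exact small_of_injective (kuratowskiEmbedding.isometry (QW N)).injective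
  haveI := hSmall
  -- transfer to a Type-0 copy
  set s : QW N ≃ Shrink.{0} (QW N) := equivShrink (QW N) with hsdef
  letI tH : TopologicalSpace (Shrink.{0} (QW N)) := TopologicalSpace.induced (⇑s.symm) tQ
  have hembed : Topology.IsEmbedding (⇑s.symm) := ⟨⟨rfl⟩, s.symm.injective⟩
  have hμ : ⇑(Shrink.mulEquiv (α := QW N)) = ⇑s.symm := rfl
  haveI hTGH : IsTopologicalGroup (Shrink.{0} (QW N)) :=
    hembed.toIsInducing.topologicalGroup (Shrink.mulEquiv (α := QW N))
  haveI hMetH : MetrizableSpace (Shrink.{0} (QW N)) := hembed.metrizableSpace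
  have hscont : Continuous ⇑s := by
    apply continuous_induced_rng.2
    rw [Equiv.symm_comp_self]
    exact continuous_id
  haveI hSepH : SeparableSpace (Shrink.{0} (QW N)) :=
    (s.surjective.denseRange).separableSpace hscont
  -- the final homomorphism
  set π' : G →* Shrink.{0} (QW N) :=
    ((Shrink.mulEquiv (α := QW N)).symm.toMonoidHom).comp π with hπ'def
  have hcoe : ⇑π' = ⇑s ∘ ⇑π := rfl
  refine ⟨Shrink.{0} (QW N), inferInstance, tH, hTGH, hSepH, hMetH, π', ?_, ?_, ?_⟩
  · rw [hcoe]; exact hscont.comp hπcont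
  · rw [hcoe]; exact s.surjective.comp hπsurj
  · rw [hcoe, Set.image_comp, Set.preimage_comp, Set.preimage_image_eq _ s.injective, hsat]
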